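/- There exists a constant C > 0 such that for all real numbers ρ, δ with 0 < δ ≤ 1 and δ < ρ, and all integers i, j ∈ ℤ, one has both ∑_{k∈ℤ} exp(−ρ(|i+k| + |k+j|)) ≤ C δ^{−1} exp(−(ρ−δ)|i−j|) and ∑_{k∈ℤ} exp(−ρ(|i−k| + |k+j|)) ≤ C δ^{−1} exp(−(ρ−δ)|i+j|). -/

import Mathlib

open Real

private lemma aux_geo (δ : ℝ) (h0 : 0 < δ) (h1 : δ ≤ 1) :
    Summable (fun k : ℤ => Real.exp (-δ * |(k : ℝ)|)) ∧
    (∑' k : ℤ, Real.exp (-δ * |(k : ℝ)|)) ≤ 4 / δ := by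
  have hr0 : 0 < Real.exp (-δ) := Real.exp_pos _
  have hr1 : Real.exp (-δ) < 1 := by
    rw [Real.exp_lt_one_iff]; linarith
  have hp : ∀ n : ℕ, Real.exp (-δ * |((n : ℤ) : ℝ)|) = Real.exp (-δ) ^ n := by
    intro n
    rw [← Real.exp_nat_mul]
    congr 1
    push_cast
    rw [abs_of_nonneg (by positivity)]
    ring
  have hn : ∀ n : ℕ, Real.exp (-δ * |((-(n : ℕ) : ℤ) : ℝ)|) = Real.exp (-δ) ^ n := by
    intro n
    rw [← Real.exp_nat_mul]
    congr 1
    push_cast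
    rw [abs_neg, abs_of_nonneg (by positivity)]
    ring
  have hgeo : Summable (fun n : ℕ => Real.exp (-δ) ^ n) :=
    summable_geometric_of_lt_one hr0.le hr1
  have hs1 : Summable (fun n : ℕ => Real.exp (-δ * |((n : ℤ) : ℝ)|)) := by
    simpa only [hp] using hgeo
  have hs2 : Summable (fun n : ℕ => Real.exp (-δ * |((-(n : ℕ) : ℤ) : ℝ)|)) := by
    simpa only [hn] using hgeo
  have hsum : Summable (fun k : ℤ => Real.exp (-δ * |(k : ℝ)|)) :=
    Summable.of_nat_of_neg (f := fun k : ℤ => Real.exp (-δ * |(k : ℝ)|)) hs1 hs2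
  refine ⟨hsum, ?_⟩
  have ht : (∑' k : ℤ, Real.exp (-δ * |(k : ℝ)|)) =
      (1 - Real.exp (-δ))⁻¹ + (1 - Real.exp (-δ))⁻¹ - 1 := by
    rw [Summable.tsum_of_nat_of_neg (f := fun k : ℤ => Real.exp (-δ * |(k : ℝ)|)) hs1 hs2]
    simp only [hp, hn, tsum_geometric_of_lt_one hr0.le hr1]
    norm_num
  rw [ht]
  have hb : Real.exp (-δ) ≤ 1 / (1 + δ) := by
    rw [le_div_iff₀ (by linarith)]
    have h := Real.add_one_le_exp δ
    have hre : Real.exp (-δ) * Real.exp δ = 1 := by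
      rw [← Real.exp_add]; norm_num
    nlinarith
  have hb2 : (1 : ℝ) / (1 + δ) ≤ 1 - δ / 2 := by
    rw [div_le_iff₀ (by linarith)]
    nlinarith
  have h2 : δ / 2 ≤ 1 - Real.exp (-δ) := by linarith
  have h3 : (1 - Real.exp (-δ))⁻¹ ≤ 2 * δ⁻¹ := by
    have hle := inv_anti₀ (show (0:ℝ) < δ / 2 by positivity) h2
    have he : (δ / 2)⁻¹ = 2 * δ⁻¹ := by
      field_simp
    linarith [he ▸ hle]
  have h4 : (4 : ℝ) / δ = 4 * δ⁻¹ := by rw [div_eq_mul_inv]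
  rw [h4]
  linarith

private lemma aux_conv (ρ δ : ℝ) (h0 : 0 < δ) (h1 : δ ≤ 1) (h2 : δ < ρ)
    (j : ℤ) (D : ℝ) (hD : 0 ≤ D) (F : ℤ → ℝ)
    (hF1 : ∀ k : ℤ, D ≤ F k) (hF2 : ∀ k : ℤ, |(k : ℝ) + (j : ℝ)| ≤ F k) :
    Summable (fun k : ℤ => Real.exp (-ρ * F k)) ∧
    (∑' k : ℤ, Real.exp (-ρ * F k)) ≤ 4 * δ⁻¹ * Real.exp (-(ρ - δ) * D) := by
  have hpt : ∀ k : ℤ, Real.exp (-ρ * F k) ≤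
      Real.exp (-(ρ - δ) * D) * Real.exp (-δ * |(k : ℝ) + (j : ℝ)|) := by
    intro k
    rw [← Real.exp_add, Real.exp_le_exp]
    have := hF1 k
    have := hF2 k
    have habs : 0 ≤ |(k : ℝ) + (j : ℝ)| := abs_nonneg _
    nlinarith
  have hsb : Summable (fun k : ℤ => Real.exp (-δ * |(k : ℝ) + (j : ℝ)|)) := by
    have h := ((Equiv.addRight j).summable_iff
      (f := fun k : ℤ => Real.exp (-δ * |(k : ℝ)|))).mpr (aux_geo δ h0 h1).1
    refine h.congr fun k => ?_
    simp only [Function.comp_apply, Equiv.coe_addRight]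
    push_cast
    ring_nf
  have hgs : Summable (fun k : ℤ =>
      Real.exp (-(ρ - δ) * D) * Real.exp (-δ * |(k : ℝ) + (j : ℝ)|)) := hsb.mul_left _
  have hsum : Summable (fun k : ℤ => Real.exp (-ρ * F k)) :=
    Summable.of_nonneg_of_le (fun k => (Real.exp_pos _).le) hpt hgs
  refine ⟨hsum, ?_⟩
  calc (∑' k : ℤ, Real.exp (-ρ * F k))
      ≤ ∑' k : ℤ, Real.exp (-(ρ - δ) * D) * Real.exp (-δ * |(k : ℝ) + (j : ℝ)|) :=
        Summable.tsum_le_tsum hpt hsum hgs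
    _ = Real.exp (-(ρ - δ) * D) * ∑' k : ℤ, Real.exp (-δ * |(k : ℝ) + (j : ℝ)|) :=
        tsum_mul_left
    _ ≤ Real.exp (-(ρ - δ) * D) * (4 / δ) := by
        apply mul_le_mul_of_nonneg_left _ (Real.exp_pos _).le
        have heq : (∑' k : ℤ, Real.exp (-δ * |(k : ℝ) + (j : ℝ)|)) =
            ∑' k : ℤ, Real.exp (-δ * |(k : ℝ)|) := by
          rw [← (Equiv.addRight j).tsum_eq (fun k : ℤ => Real.exp (-δ * |(k : ℝ)|))]
          apply tsum_congr
          intro k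
          simp only [Equiv.coe_addRight]
          push_cast
          ring_nf
        rw [heq]
        exact (aux_geo δ h0 h1).2
    _ = 4 * δ⁻¹ * Real.exp (-(ρ - δ) * D) := by rw [div_eq_mul_inv]; ring

theorem exp_convolution_hankel_sum_le :
    ∃ C : ℝ, 0 < C ∧
      ∀ ρ δ : ℝ, 0 < δ → δ ≤ 1 → δ < ρ → ∀ i j : ℤ,
        (Summable (fun k : ℤ => Real.exp (-ρ * (|(i : ℝ) + (k : ℝ)| + |(k : ℝ) + (j : ℝ)|))) ∧
          (∑' k : ℤ, Real.exp (-ρ * (|(i : ℝ) + (k : ℝ)| + |(k : ℝ) + (j : ℝ)|))) ≤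
            C * δ⁻¹ * Real.exp (-(ρ - δ) * |(i : ℝ) - (j : ℝ)|)) ∧
        (Summable (fun k : ℤ => Real.exp (-ρ * (|(i : ℝ) - (k : ℝ)| + |(k : ℝ) + (j : ℝ)|))) ∧
          (∑' k : ℤ, Real.exp (-ρ * (|(i : ℝ) - (k : ℝ)| + |(k : ℝ) + (j : ℝ)|))) ≤
            C * δ⁻¹ * Real.exp (-(ρ - δ) * |(i : ℝ) + (j : ℝ)|)) := by
  refine ⟨4, by norm_num, fun ρ δ h0 h1 h2 i j => ?_⟩
  constructor
  · exact aux_conv ρ δ h0 h1 h2 j |(i : ℝ) - (j : ℝ)| (abs_nonneg _)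
      (fun k => |(i : ℝ) + (k : ℝ)| + |(k : ℝ) + (j : ℝ)|)
      (fun k => by
        calc |(i:ℝ) - j| = |((i:ℝ) + k) - ((k:ℝ) + j)| := by ring_nf
          _ ≤ |(i:ℝ) + k| + |(k:ℝ) + j| := abs_sub _ _)
      (fun k => le_add_of_nonneg_left (abs_nonneg _))
  · exact aux_conv ρ δ h0 h1 h2 j |(i : ℝ) + (j : ℝ)| (abs_nonneg _)
      (fun k => |(i : ℝ) - (k : ℝ)| + |(k : ℝ) + (j : ℝ)|)
      (fun k => by
        calc |(i:ℝ) + j| = |((i:ℝ) - k) + ((k:ℝ) + j)| := by ring_nf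
          _ ≤ |(i:ℝ) - k| + |(k:ℝ) + j| := abs_add_le _ _)
      (fun k => le_add_of_nonneg_left (abs_nonneg _))
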